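/- Suppose a 6×6 real matrix γ with 2×2 diagonal blocks λᵢ·I (λᵢ ≥ 1), with D₁₂ diagonal, L upper-triangular, and M arbitrary 2×2 real, satisfies the purity conditions: the three determinant equations (1 = λ₁² + det D₁₂ + det L, etc.) and 0 = λ₁ J D₁₂ + λ₂ D₁₂ J + L J Mᵀ, 0 = λ₁ J L + λ₃ L J + D₁₂ J Mᵀ, 0 = λ₂ J M + λ₃ M J + D₁₂ᵀ J L. Then, up to an orthogonal transformation on the third mode, both L and M are diagonal matrices. -/

import Mathlib

open Matrix

theorem stmt_11 (l₁ l₂ l₃ : ℝ) (h₁ : 1 ≤ l₁) (h₂ : 1 ≤ l₂) (h₃ : 1 ≤ l₃)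
    (J : Matrix (Fin 2) (Fin 2) ℝ) (hJ : J = !![0, -1; 1, 0])
    (D₁₂ L M : Matrix (Fin 2) (Fin 2) ℝ)
    (hD₁₂ : D₁₂.IsDiag) (hL : L 1 0 = 0)
    (e₁ : l₁ ^ 2 + D₁₂.det + L.det = 1)
    (e₂ : l₂ ^ 2 + D₁₂.det + M.det = 1)
    (e₃ : l₃ ^ 2 + L.det + M.det = 1)
    (e₄ : l₁ • (J * D₁₂) + l₂ • (D₁₂ * J) + L * J * Mᵀ = 0)
    (e₅ : l₁ • (J * L) + l₃ • (L * J) + D₁₂ * J * Mᵀ = 0)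
    (e₆ : l₂ • (J * M) + l₃ • (M * J) + D₁₂ᵀ * J * L = 0) :
    ∃ O : Matrix (Fin 2) (Fin 2) ℝ,
      O * Oᵀ = 1 ∧ O.det = 1 ∧ (L * Oᵀ).IsDiag ∧ (M * Oᵀ).IsDiag := by
  subst hJ
  have hl1 : (0:ℝ) < l₁ := lt_of_lt_of_le one_pos h₁
  have hl2 : (0:ℝ) < l₂ := lt_of_lt_of_le one_pos h₂
  have hl3 : (0:ℝ) < l₃ := lt_of_lt_of_le one_pos h₃
  have hd01 : D₁₂ 0 1 = 0 := hD₁₂ (by decide)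
  have hd10 : D₁₂ 1 0 = 0 := hD₁₂ (by decide)
  have E1 := congrFun (congrFun e₄ 0) 0
  have E2 := congrFun (congrFun e₄ 1) 1
  have E3 := congrFun (congrFun e₅ 1) 1
  have E4 := congrFun (congrFun e₆ 0) 0
  have E5 := congrFun (congrFun e₆ 0) 1
  simp [Matrix.mul_apply, Matrix.vecMul, dotProduct, Fin.sum_univ_two, hL, hd01, hd10]
    at E1 E2 E3 E4 E5
  -- E1 : L 0 1 * M 0 0 + -(L 0 0 * M 0 1) = 0
  -- E2 : L 1 1 = 0 ∨ M 1 0 = 0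
  -- E3 : l₁ * L 0 1 + D₁₂ 1 1 * M 1 0 = 0
  -- E4 : -(l₂ * M 1 0) + l₃ * M 0 1 = 0
  -- E5 : -(l₂ * M 1 1) + -(l₃ * M 0 0) + -(D₁₂ 0 0 * L 1 1) = 0
  by_cases hr : M 1 0 = 0
  · -- O = 1 works
    have hq : L 0 1 = 0 := by
      have : l₁ * L 0 1 = 0 := by linear_combination E3 - D₁₂ 1 1 * hr
      exact (mul_eq_zero.1 this).resolve_left (ne_of_gt hl1)
    have hn : M 0 1 = 0 := by
      have : l₃ * M 0 1 = 0 := by linear_combination E4 + l₂ * hr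
      exact (mul_eq_zero.1 this).resolve_left (ne_of_gt hl3)
    refine ⟨1, by simp, by simp, ?_, ?_⟩ <;>
    · rw [Matrix.transpose_one, Matrix.mul_one]
      intro i j hij
      fin_cases i <;> fin_cases j <;> simp_all
  · -- rotation case
    have hs : L 1 1 = 0 := E2.resolve_right hr
    have hn : M 0 1 ≠ 0 := by
      intro h
      apply hr
      have : l₂ * M 1 0 = 0 := by linear_combination -E4 + l₃ * h
      exact (mul_eq_zero.1 this).resolve_left (ne_of_gt hl2)
    set m := M 0 0 with hm
    set n := M 0 1 with hnn
    have hNpos : (0:ℝ) < Real.sqrt (m ^ 2 + n ^ 2) := by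
      apply Real.sqrt_pos.2
      positivity
    set N := Real.sqrt (m ^ 2 + n ^ 2) with hN
    have hN2 : N ^ 2 = m ^ 2 + n ^ 2 := Real.sq_sqrt (by positivity)
    have hNne : N ≠ 0 := ne_of_gt hNpos
    have key : M 1 0 * m + M 1 1 * n = 0 := by
      have h0 : l₂ * l₃ * (M 1 0 * m + M 1 1 * n) = 0 := by
        linear_combination (-(l₃ * m)) * E4 + (-(l₃ * n)) * E5 - (l₃ * n * D₁₂ 0 0) * hs
      have := mul_eq_zero.1 h0
      rcases this with h | h
      · exact absurd h (by positivity)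
      · exact h
    have hdiag : ∀ A : Matrix (Fin 2) (Fin 2) ℝ, A 0 1 = 0 → A 1 0 = 0 → A.IsDiag := by
      intro A g1 g2 i j hij
      fin_cases i <;> fin_cases j <;> simp_all
    set O : Matrix (Fin 2) (Fin 2) ℝ := !![m / N, n / N; -(n / N), m / N] with hO
    have hO00 : O 0 0 = m / N := rfl
    have hO01 : O 0 1 = n / N := rfl
    have hO10 : O 1 0 = -(n / N) := rfl
    have hO11 : O 1 1 = m / N := rfl
    have hmulT : ∀ (A : Matrix (Fin 2) (Fin 2) ℝ) (i j : Fin 2),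
        (A * Oᵀ) i j = A i 0 * O j 0 + A i 1 * O j 1 := by
      intro A i j
      simp [Matrix.mul_apply, Fin.sum_univ_two]
    have hunit : m / N * (m / N) + n / N * (n / N) = 1 := by
      field_simp
      linear_combination -hN2
    refine ⟨O, ?_, ?_, ?_, ?_⟩
    · rw [← Matrix.ext_iff]
      simp only [Fin.forall_fin_two, hmulT, hO00, hO01, hO10, hO11, Matrix.one_apply_eq,
        Matrix.one_apply_ne (by decide : (0:Fin 2) ≠ 1), Matrix.one_apply_ne (by decide : (1:Fin 2) ≠ 0)]
      refine ⟨⟨hunit, by ring⟩, by ring, ?_⟩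
      calc -(n / N) * -(n / N) + m / N * (m / N)
          = m / N * (m / N) + n / N * (n / N) := by ring
        _ = 1 := hunit
    · rw [Matrix.det_fin_two, hO00, hO01, hO10, hO11]
      calc m / N * (m / N) - n / N * -(n / N)
          = m / N * (m / N) + n / N * (n / N) := by ring
        _ = 1 := hunit
    · refine hdiag _ ?_ ?_ <;> rw [hmulT]
      · rw [hO10, hO11]
        have hE1 : L 0 1 * m = L 0 0 * n := by linear_combination E1
        field_simp
        linear_combination hE1
      · rw [hO00, hO01, hL, hs]
        ring
    · refine hdiag _ ?_ ?_ <;> rw [hmulT]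
      · rw [hO10, hO11]
        ring
      · rw [hO00, hO01]
        have hk : M 1 0 * m = -(M 1 1 * n) := by linear_combination key
        field_simp
        linear_combination hk
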